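/- For all x in [0,1], 3x/(2 + sqrt(1-x^2)) ≤ arcsin(x). -/

import Mathlib

open Real Set

private lemma hd1 (t : ℝ) :
    HasDerivAt (fun t : ℝ => 2 - 2 * Real.cos t - t * Real.sin t)
      (Real.sin t - t * Real.cos t) t := by
  have h1 : HasDerivAt (fun t : ℝ => 2 - 2 * Real.cos t) (2 * Real.sin t) t := by
    simpa using ((Real.hasDerivAt_cos t).const_mul 2).const_sub 2
  have h2 : HasDerivAt (fun t : ℝ => t * Real.sin t)
      (1 * Real.sin t + t * Real.cos t) t :=
    (hasDerivAt_id t).mul (Real.hasDerivAt_sin t)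
  exact (h1.sub h2).congr_deriv (by ring)

private lemma hd2 (t : ℝ) :
    HasDerivAt (fun t : ℝ => t * (2 + Real.cos t) - 3 * Real.sin t)
      (2 - 2 * Real.cos t - t * Real.sin t) t := by
  have h1 : HasDerivAt (fun t : ℝ => t * (2 + Real.cos t))
      (1 * (2 + Real.cos t) + t * (-Real.sin t)) t :=
    (hasDerivAt_id t).mul ((Real.hasDerivAt_cos t).const_add 2)
  have h2 : HasDerivAt (fun t : ℝ => 3 * Real.sin t) (3 * Real.cos t) t :=
    (Real.hasDerivAt_sin t).const_mul 3
  exact (h1.sub h2).congr_deriv (by ring)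

private lemma g1_nonneg : ∀ t ∈ Set.Icc (0:ℝ) (π/2),
    0 ≤ 2 - 2 * Real.cos t - t * Real.sin t := by
  have hmono : MonotoneOn (fun t : ℝ => 2 - 2 * Real.cos t - t * Real.sin t)
      (Set.Icc 0 (π/2)) := by
    apply monotoneOn_of_deriv_nonneg (convex_Icc _ _)
    · exact Continuous.continuousOn (by continuity)
    · intro t ht
      rw [interior_Icc] at ht
      exact (hd1 t).differentiableAt.differentiableWithinAt
    · intro t ht
      rw [interior_Icc] at ht
      rw [(hd1 t).deriv]
      have hc : 0 < Real.cos t := Real.cos_pos_of_mem_Ioo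
        ⟨by linarith [ht.1, Real.pi_pos], ht.2⟩
      have := Real.lt_tan ht.1 ht.2
      rw [Real.tan_eq_sin_div_cos, lt_div_iff₀ hc] at this
      linarith
  intro t ht
  have := hmono (Set.left_mem_Icc.mpr (by positivity)) ht ht.1
  simpa using this

private lemma key : ∀ t ∈ Set.Icc (0:ℝ) (π/2),
    3 * Real.sin t ≤ t * (2 + Real.cos t) := by
  have hmono : MonotoneOn (fun t : ℝ => t * (2 + Real.cos t) - 3 * Real.sin t)
      (Set.Icc 0 (π/2)) := by
    apply monotoneOn_of_deriv_nonneg (convex_Icc _ _)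
    · exact Continuous.continuousOn (by continuity)
    · intro t ht
      rw [interior_Icc] at ht
      exact (hd2 t).differentiableAt.differentiableWithinAt
    · intro t ht
      rw [interior_Icc] at ht
      rw [(hd2 t).deriv]
      exact g1_nonneg t ⟨ht.1.le, ht.2.le⟩
  intro t ht
  have := hmono (Set.left_mem_Icc.mpr (by positivity)) ht ht.1
  simp only [Real.sin_zero, Real.cos_zero, mul_zero, zero_mul, mul_comm] at this
  nlinarith [this]

theorem stmt_0 : ∀ x ∈ Set.Icc (0:ℝ) 1,
    3 * x / (2 + Real.sqrt (1 - x ^ 2)) ≤ Real.arcsin x := by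
  intro x hx
  obtain ⟨hx0, hx1⟩ := hx
  have hden : 0 < 2 + Real.sqrt (1 - x ^ 2) := by positivity
  rw [div_le_iff₀ hden]
  have ht : Real.arcsin x ∈ Set.Icc (0:ℝ) (π/2) :=
    ⟨Real.arcsin_nonneg.mpr hx0, Real.arcsin_le_pi_div_two x⟩
  have h := key (Real.arcsin x) ht
  rw [Real.sin_arcsin (by linarith) hx1, Real.cos_arcsin] at h
  linarith
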